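/- arXiv:2504.21010 — 4 statements merged into one kernel-verified Lean document; each statement's English description precedes it below -/
import Mathlib

section
/- For any finite group G, any finite-dimensional complex representation φ of G, and any g ∈ G, the operator D_g := Σ_{h∈G} x_{g⁻¹h} ∂/∂x_h applied to the polynomial det(Σ_{h∈G} φ(h) x_h) equals χ_φ(g) · det(Σ_{h∈G} φ(h) x_h), where χ_φ is the character of φ. -/
open MvPolynomial Finset

section aux

variable {A : Type*} [CommRing A] [Algebra ℂ A]

lemma deriv_prod (D : Derivation ℂ A A) {ι : Type*} [DecidableEq ι] (s : Finset ι) (f : ι → A) :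
    D (∏ i ∈ s, f i) = ∑ i ∈ s, D (f i) * ∏ j ∈ s.erase i, f j := by
  induction s using Finset.induction with
  | empty => simp
  | @insert a s ha ih =>
    rw [Finset.prod_insert ha, D.leibniz, ih, Finset.sum_insert ha, Finset.erase_insert ha,
      smul_eq_mul, smul_eq_mul, Finset.mul_sum, add_comm]
    congr 1
    · exact mul_comm _ _
    refine Finset.sum_congr rfl fun i hi => ?_
    rw [Finset.erase_insert_of_ne (ne_of_mem_of_not_mem hi ha).symm, Finset.prod_insert
      (fun h => ha (Finset.mem_of_mem_erase h))]
    ring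

lemma deriv_det (D : Derivation ℂ A A) {d : ℕ} (M : Matrix (Fin d) (Fin d) A) :
    D M.det = (M.adjugate * M.map D).trace := by
  have h1 : D M.det = ∑ i : Fin d, (M.updateCol i (fun k => D (M k i))).det := by
    simp only [Matrix.det_apply, map_sum]
    rw [Finset.sum_comm]
    refine Finset.sum_congr rfl fun σ _ => ?_
    rw [Units.smul_def, map_zsmul, deriv_prod, Finset.smul_sum]
    refine Finset.sum_congr rfl fun i _ => ?_
    rw [Units.smul_def, ← Finset.mul_prod_erase Finset.univ _ (Finset.mem_univ i)]
    congr 2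
    · simp [Matrix.updateCol_apply]
    · refine Finset.prod_congr rfl fun j hj => ?_
      simp [Matrix.updateCol_apply, Finset.ne_of_mem_erase hj]
  rw [h1, Matrix.trace]
  refine Finset.sum_congr rfl fun i _ => ?_
  rw [← Matrix.cramer_apply, Matrix.cramer_eq_adjugate_mulVec]
  simp [Matrix.mulVec, Matrix.mul_apply, Matrix.diag, dotProduct]

end aux

/-- The Frobenius differential operator `D_g f = ∑_{h ∈ G} x_{g⁻¹ h} ∂f/∂x_h`. -/
noncomputable def Dop {G : Type*} [Group G] [Fintype G] (g : G)
    (f : MvPolynomial G ℂ) : MvPolynomial G ℂ :=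
  ∑ h : G, X (g⁻¹ * h) * pderiv h f

/-- The matrix `X = ∑_{h ∈ G} φ(h) x_h` with entries in the polynomial ring. -/
noncomputable def repMatrix {G : Type*} [Group G] [Fintype G] {d : ℕ}
    (φ : G →* Matrix (Fin d) (Fin d) ℂ) : Matrix (Fin d) (Fin d) (MvPolynomial G ℂ) :=
  ∑ h : G, (X h : MvPolynomial G ℂ) • (φ h).map C

theorem frobenius_Dg {G : Type*} [Group G] [Fintype G] [DecidableEq G] {d : ℕ}
    (φ : G →* Matrix (Fin d) (Fin d) ℂ) (g : G) :
    Dop g (repMatrix φ).det = C ((φ g).trace) * (repMatrix φ).det := by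
  set M := repMatrix φ with hM
  have hmap : ∀ h : G, M.map (pderiv h) = (φ h).map C := by
    intro h
    ext i j
    simp only [hM, repMatrix, Matrix.map_apply, Matrix.sum_apply, Matrix.smul_apply,
      smul_eq_mul, map_sum]
    rw [Finset.sum_eq_single h]
    · simp [pderiv_X]
    · intro k _ hk
      simp [pderiv_X, hk]
    · simp
  have key : ∀ h : G, (pderiv h) M.det = (M.adjugate * (φ h).map C).trace := by
    intro h
    rw [deriv_det (pderiv h) M, hmap h]
  rw [Dop]
  simp only [key]
  have : ∑ h : G, X (g⁻¹ * h) * (M.adjugate * (φ h).map C).trace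
      = (M.adjugate * ((φ g).map C * M)).trace := by
    have : (φ g).map C * M = ∑ h : G, (X (g⁻¹ * h) : MvPolynomial G ℂ) • (φ h).map C := by
      rw [hM, repMatrix, Finset.mul_sum]
      refine Fintype.sum_equiv (Equiv.mulLeft g) _ _ fun k => ?_
      simp only [Equiv.coe_mulLeft]
      rw [Matrix.mul_smul, ← Matrix.map_mul, ← map_mul, inv_mul_cancel_left]
    rw [this, Matrix.mul_sum, Matrix.trace_sum]
    refine Finset.sum_congr rfl fun h _ => ?_
    rw [Matrix.mul_smul, Matrix.trace_smul, smul_eq_mul]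
  rw [this, ← Matrix.mul_assoc, Matrix.trace_mul_cycle,
    Matrix.mul_adjugate, Matrix.smul_mul, Matrix.one_mul, Matrix.trace_smul, smul_eq_mul,
    mul_comm]
  congr 1
  simp [Matrix.trace, Matrix.diag, map_sum]
end

section
/- For any finite group G, any finite-dimensional complex representation φ of G, and any g ∈ G, the operator Δ_g := Σ_{h∈G} x_{hg⁻¹} ∂/∂x_h applied to det(Σ_{h∈G} φ(h) x_h) equals χ_φ(g) · det(Σ_{h∈G} φ(h) x_h). -/
open MvPolynomial

/-- The Frobenius differential operator `Δ_g f = ∑_{h ∈ G} x_{h g⁻¹} ∂f/∂x_h`. -/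
noncomputable def Delta {G : Type*} [Group G] [Fintype G] (g : G)
    (f : MvPolynomial G ℂ) : MvPolynomial G ℂ :=
  ∑ h : G, X (h * g⁻¹) * pderiv h f

/-- Leibniz rule for finite products. -/
lemma derivation_finset_prod {R A : Type*} [CommRing R] [CommRing A] [Algebra R A]
    (D : Derivation R A A) {ι : Type*} [DecidableEq ι] (s : Finset ι) (f : ι → A) :
    D (∏ i ∈ s, f i) = ∑ i ∈ s, (∏ j ∈ s.erase i, f j) * D (f i) := by
  induction s using Finset.induction_on with
  | empty => simp
  | @insert a s ha ih =>
    rw [Finset.prod_insert ha, D.leibniz, Finset.sum_insert ha, Finset.erase_insert ha,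
      smul_eq_mul, smul_eq_mul, ih, Finset.mul_sum]
    rw [add_comm]
    congr 1
    refine Finset.sum_congr rfl fun i hi => ?_
    rw [Finset.erase_insert_of_ne (ne_of_mem_of_not_mem hi ha).symm,
      Finset.prod_insert (fun h => ha (Finset.mem_of_mem_erase h))]
    ring

/-- Derivation of a determinant, column by column. -/
lemma derivation_det {R A : Type*} [CommRing R] [CommRing A] [Algebra R A]
    (D : Derivation R A A) {n : Type*} [DecidableEq n] [Fintype n] (M : Matrix n n A) :
    D M.det = ∑ j, (M.updateCol j (fun i => D (M i j))).det := by
  simp only [Matrix.det_apply]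
  rw [map_sum, Finset.sum_comm]
  refine Finset.sum_congr rfl fun σ _ => ?_
  rw [Derivation.map_smul_of_tower, derivation_finset_prod, Finset.smul_sum]
  refine Finset.sum_congr rfl fun j _ => ?_
  congr 1
  rw [← Finset.mul_prod_erase _ _ (Finset.mem_univ j)]
  rw [Matrix.updateCol_apply, if_pos rfl, mul_comm]
  congr 1
  refine Finset.prod_congr rfl fun i hi => ?_
  rw [Matrix.updateCol_apply, if_neg (Finset.ne_of_mem_erase hi)]

theorem frobenius_Deltag {G : Type*} [Group G] [Fintype G] [DecidableEq G] {d : ℕ}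
    (φ : G →* Matrix (Fin d) (Fin d) ℂ) (g : G) :
    Delta g (repMatrix φ).det = C ((φ g).trace) * (repMatrix φ).det := by
  classical
  set D : Derivation ℂ (MvPolynomial G ℂ) (MvPolynomial G ℂ) :=
    mkDerivation ℂ (fun h => X (h * g⁻¹)) with hD
  -- a finite sum of derivations applies pointwise
  have key : ∀ (s : Finset G) (f : MvPolynomial G ℂ),
      ((∑ h ∈ s, (X (h * g⁻¹) : MvPolynomial G ℂ) • pderiv h :
        Derivation ℂ (MvPolynomial G ℂ) (MvPolynomial G ℂ)) f)
      = ∑ h ∈ s, X (h * g⁻¹) * pderiv h f := by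
    intro s
    induction s using Finset.induction_on with
    | empty => simp
    | @insert a s ha ih =>
      intro f
      rw [Finset.sum_insert ha, Finset.sum_insert ha, Derivation.add_apply, ih]
      congr 1
  -- Delta g coincides with the derivation D
  have hDelta : ∀ f, Delta g f = D f := by
    intro f
    have hE : (∑ h : G, (X (h * g⁻¹) : MvPolynomial G ℂ) • pderiv h :
        Derivation ℂ (MvPolynomial G ℂ) (MvPolynomial G ℂ)) = D := by
      apply derivation_ext
      intro i
      rw [key, hD, mkDerivation_X]
      simp [pderiv_X, Pi.single_apply, Finset.sum_ite_eq']
    rw [← hE, key]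
    rfl
  rw [hDelta, derivation_det]
  -- compute the derived columns
  have hentry : ∀ i j, D (repMatrix φ i j) = ∑ l, (C ((φ g) l j) : MvPolynomial G ℂ) • (repMatrix φ) i l := by
    intro i j
    simp only [repMatrix, Matrix.sum_apply, Matrix.smul_apply, Matrix.map_apply, smul_eq_mul]
    rw [map_sum]
    have step : ∀ h : G, D (X h * C ((φ h) i j)) = C ((φ h) i j) * X (h * g⁻¹) := by
      intro h
      rw [D.leibniz, derivation_C, smul_zero, zero_add, smul_eq_mul, hD, mkDerivation_X]
    simp only [step]
    rw [← Equiv.sum_comp (Equiv.mulRight g) (fun h => C ((φ h) i j) * X (h * g⁻¹))]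
    simp only [Equiv.coe_mulRight, mul_inv_cancel_right]
    simp only [Finset.mul_sum]
    rw [Finset.sum_comm]
    refine Finset.sum_congr rfl fun h _ => ?_
    have : (φ (h * g)) i j = ∑ l, (φ h) i l * (φ g) l j := by
      rw [map_mul]; rfl
    rw [this, map_sum, Finset.sum_mul]
    refine Finset.sum_congr rfl fun l _ => ?_
    rw [map_mul]
    ring
  have : ∀ j, ((repMatrix φ).updateCol j (fun i => D (repMatrix φ i j))).det
      = C ((φ g) j j) * (repMatrix φ).det := by
    intro j
    have h2 : (fun i => D (repMatrix φ i j))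
        = fun k => ∑ l, (C ((φ g) l j) : MvPolynomial G ℂ) • repMatrix φ k l :=
      funext fun i => hentry i j
    rw [h2, Matrix.det_updateCol_sum, smul_eq_mul]
  simp only [this]
  rw [← Finset.sum_mul, ← map_sum, Matrix.trace]
  rfl
end

section
/- Let G be a finite group with irreducible complex representations φ₁,…,φ_r of degrees d₁,…,d_r (one from each equivalence class), and set y_i := det(Σ_{h∈G} φ_i(h) x_h). Then the group determinant factorizes as Θ_G(x_g) = Π_{i=1}^r y_i^{d_i} (Frobenius determinant theorem). -/
open MvPolynomial

/-- A matrix representation is irreducible: the space is nonzero and the only invariant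
subspaces are `⊥` and `⊤`. -/
def MatRepIrreducible {G : Type*} [Group G] {d : ℕ}
    (φ : G →* Matrix (Fin d) (Fin d) ℂ) : Prop :=
  0 < d ∧ ∀ W : Submodule ℂ (Fin d → ℂ),
    (∀ g : G, ∀ v ∈ W, (φ g).mulVec v ∈ W) → W = ⊥ ∨ W = ⊤

/-- Equivalence of two matrix representations. -/
def MatRepEquiv {G : Type*} [Group G] {d₁ d₂ : ℕ}
    (φ : G →* Matrix (Fin d₁) (Fin d₁) ℂ) (ψ : G →* Matrix (Fin d₂) (Fin d₂) ℂ) : Prop :=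
  ∃ e : (Fin d₁ → ℂ) ≃ₗ[ℂ] (Fin d₂ → ℂ),
    ∀ (g : G) (v : Fin d₁ → ℂ), e ((φ g).mulVec v) = (ψ g).mulVec (e v)

/-- The group determinant `Θ_G = det (x_{g h⁻¹})_{g,h ∈ G}`. -/
noncomputable def groupDet (G : Type*) [Group G] [Fintype G] [DecidableEq G] :
    MvPolynomial G ℂ :=
  Matrix.det (Matrix.of fun g h : G => (X (g * h⁻¹) : MvPolynomial G ℂ))

noncomputable section
namespace Frob

set_option linter.unusedSectionVars false
variable {G : Type*} [Group G] [Fintype G] [DecidableEq G]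

/-- The left regular representation on `G → ℂ`. -/
def reg (g : G) : (G → ℂ) →ₗ[ℂ] (G → ℂ) := LinearMap.funLeft ℂ ℂ (fun x => g⁻¹ * x)

lemma reg_apply (g : G) (v : G → ℂ) (x : G) : reg g v x = v (g⁻¹ * x) := rfl

lemma reg_reg (g h : G) (v : G → ℂ) : reg g (reg h v) = reg (g * h) v := by
  funext x; simp [reg_apply, mul_assoc]

lemma reg_one (v : G → ℂ) : reg (1 : G) v = v := by funext x; simp [reg_apply]

/-- Invariant subspace of the regular representation. -/
def Inv (W : Submodule ℂ (G → ℂ)) : Prop := ∀ g, ∀ v ∈ W, reg g v ∈ W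

/-- Intertwiner from matrix rep `ψ` into the regular representation. -/
def Eqv {m : ℕ} (ψ : G →* Matrix (Fin m) (Fin m) ℂ) (u : (Fin m → ℂ) →ₗ[ℂ] (G → ℂ)) : Prop :=
  ∀ (g : G) (x : Fin m → ℂ), u ((ψ g).mulVec x) = reg g (u x)

/-- Maschke: equivariant projection onto an invariant subspace. -/
lemma maschke (W : Submodule ℂ (G → ℂ)) (hW : Inv W) :
    ∃ q : (G → ℂ) →ₗ[ℂ] (G → ℂ), (∀ v, q v ∈ W) ∧ (∀ w ∈ W, q w = w) ∧
      (∀ g v, q (reg g v) = reg g (q v)) := by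
  obtain ⟨W', hc⟩ := Submodule.exists_isCompl W
  set p : (G → ℂ) →ₗ[ℂ] (G → ℂ) := W.subtype ∘ₗ (W.linearProjOfIsCompl W' hc) with hp
  have hpW : ∀ v, p v ∈ W := fun v => (W.linearProjOfIsCompl W' hc v).2
  have hpid : ∀ w ∈ W, p w = w := fun w hw => by
    exact congrArg Subtype.val (Submodule.projectionOnto_apply_left hc ⟨w, hw⟩)
  set c : ℂ := (Fintype.card G : ℂ)⁻¹ with hc'
  refine ⟨c • ∑ g : G, (reg g) ∘ₗ p ∘ₗ (reg g⁻¹), ?_, ?_, ?_⟩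
  · intro v
    simp only [LinearMap.smul_apply, LinearMap.sum_apply, LinearMap.comp_apply]
    exact W.smul_mem _ (Submodule.sum_mem _ fun g _ => hW g _ (hpW _))
  · intro w hw
    have hcard : (Fintype.card G : ℂ) ≠ 0 := Nat.cast_ne_zero.mpr Fintype.card_ne_zero
    simp only [LinearMap.smul_apply, LinearMap.sum_apply, LinearMap.comp_apply]
    have : ∀ g : G, reg g (p (reg g⁻¹ w)) = w := by
      intro g
      rw [hpid _ (hW g⁻¹ _ hw), reg_reg, mul_inv_cancel, reg_one]
    rw [Finset.sum_congr rfl fun g _ => this g, Finset.sum_const, Finset.card_univ]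
    rw [hc', ← Nat.cast_smul_eq_nsmul ℂ, smul_smul, inv_mul_cancel₀ hcard, one_smul]
  · intro g₀ v
    simp only [LinearMap.smul_apply, LinearMap.sum_apply, LinearMap.comp_apply]
    rw [map_smul, map_sum]
    congr 1
    refine Fintype.sum_equiv (Equiv.mulLeft g₀⁻¹) _ _ fun g => ?_
    simp only [Equiv.coe_mulLeft]
    rw [reg_reg g⁻¹ g₀, reg_reg g₀ (g₀⁻¹ * g)]
    simp [mul_inv_rev, mul_assoc]

variable {r : ℕ} {d : Fin r → ℕ}

section Umap
variable (φ : ∀ i, G →* Matrix (Fin (d i)) (Fin (d i)) ℂ)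
variable {ι : Type} [Fintype ι] (ind : ι → Fin r)
variable (u : ∀ k, (Fin (d (ind k)) → ℂ) →ₗ[ℂ] (G → ℂ))

/-- Combined map out of a direct sum of irreducibles. -/
def Umap : (∀ k, Fin (d (ind k)) → ℂ) →ₗ[ℂ] (G → ℂ) :=
  ∑ k, (u k).comp (LinearMap.proj k)

lemma Umap_apply (x : ∀ k, Fin (d (ind k)) → ℂ) : Umap ind u x = ∑ k, u k (x k) := by
  simp [Umap]

end Umap

variable (d) in
/-- `W` decomposes as a direct sum of copies of the `φ i`. -/
def Good (φ : ∀ i, G →* Matrix (Fin (d i)) (Fin (d i)) ℂ) (W : Submodule ℂ (G → ℂ)) : Prop :=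
  ∃ (ι : Type) (_ : Fintype ι) (_ : DecidableEq ι) (ind : ι → Fin r)
    (u : ∀ k, (Fin (d (ind k)) → ℂ) →ₗ[ℂ] (G → ℂ)),
    (∀ k, Eqv (φ (ind k)) (u k)) ∧ Function.Injective (Umap ind u) ∧
      LinearMap.range (Umap ind u) = W

variable (φ : ∀ i, G →* Matrix (Fin (d i)) (Fin (d i)) ℂ)

lemma good_bot : Good d φ (⊥ : Submodule ℂ (G → ℂ)) := by
  refine ⟨PEmpty, inferInstance, inferInstance, PEmpty.elim, fun k => PEmpty.elim k,
    fun k => PEmpty.elim k, fun x y _ => funext fun k => PEmpty.elim k, ?_⟩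
  apply le_antisymm
  · rintro _ ⟨x, rfl⟩
    rw [Umap_apply]
    simp
  · exact bot_le

lemma good_sup {W₁ W₂ : Submodule ℂ (G → ℂ)} (hdisj : W₁ ⊓ W₂ = ⊥)
    (h₁ : Good d φ W₁) (h₂ : Good d φ W₂) : Good d φ (W₁ ⊔ W₂) := by
  obtain ⟨ι₁, _, _, ind₁, u₁, heq₁, hinj₁, hrg₁⟩ := h₁
  obtain ⟨ι₂, _, _, ind₂, u₂, heq₂, hinj₂, hrg₂⟩ := h₂
  set uu : ∀ k : ι₁ ⊕ ι₂, (Fin (d (Sum.elim ind₁ ind₂ k)) → ℂ) →ₗ[ℂ] (G → ℂ) :=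
    fun k => Sum.rec (fun a => u₁ a) (fun b => u₂ b) k with huu
  have hsplit : ∀ x, Umap (Sum.elim ind₁ ind₂) uu x
      = Umap ind₁ u₁ (fun a => x (Sum.inl a)) + Umap ind₂ u₂ (fun b => x (Sum.inr b)) := by
    intro x
    erw [Umap_apply, Umap_apply, Umap_apply, Fintype.sum_sum_type]
    rfl
  refine ⟨ι₁ ⊕ ι₂, inferInstance, inferInstance, Sum.elim ind₁ ind₂, uu, fun k => ?_, ?_, ?_⟩
  · cases k with
    | inl a => exact heq₁ a
    | inr b => exact heq₂ b
  · rw [injective_iff_map_eq_zero]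
    intro x hx
    rw [hsplit] at hx
    have hmem : Umap ind₁ u₁ (fun a => x (Sum.inl a)) ∈ W₁ ⊓ W₂ := by
      constructor
      · exact hrg₁ ▸ LinearMap.mem_range_self _ _
      · have h' : Umap ind₁ u₁ (fun a => x (Sum.inl a))
            = -(Umap ind₂ u₂ (fun b => x (Sum.inr b))) := by
          rw [eq_neg_iff_add_eq_zero]; exact hx
        rw [h']
        exact W₂.neg_mem (hrg₂ ▸ LinearMap.mem_range_self _ _)
    rw [hdisj, Submodule.mem_bot] at hmem
    have h1z : (fun a => x (Sum.inl a)) = 0 := by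
      apply hinj₁; erw [map_zero]; exact hmem
    have h2z : (fun b => x (Sum.inr b)) = 0 := by
      apply hinj₂; erw [map_zero]
      rw [hmem, zero_add] at hx
      exact hx
    funext k
    cases k with
    | inl a => exact congrFun h1z a
    | inr b => exact congrFun h2z b
  · apply le_antisymm
    · rintro _ ⟨x, rfl⟩
      rw [hsplit]
      exact Submodule.add_mem _
        (Submodule.mem_sup_left (hrg₁ ▸ LinearMap.mem_range_self _ _))
        (Submodule.mem_sup_right (hrg₂ ▸ LinearMap.mem_range_self _ _))
    · rw [sup_le_iff]
      constructor
      · rw [← hrg₁]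
        rintro _ ⟨x₁, rfl⟩
        refine ⟨fun k => Sum.rec (fun a => x₁ a) (fun b => 0) k, ?_⟩
        rw [hsplit]
        show Umap ind₁ u₁ x₁ + Umap ind₂ u₂ 0 = Umap ind₁ u₁ x₁
        rw [map_zero, add_zero]
      · rw [← hrg₂]
        rintro _ ⟨x₂, rfl⟩
        refine ⟨fun k => Sum.rec (fun a => 0) (fun b => x₂ b) k, ?_⟩
        rw [hsplit]
        show Umap ind₁ u₁ 0 + Umap ind₂ u₂ x₂ = Umap ind₂ u₂ x₂
        rw [map_zero, zero_add]

open Module in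
lemma exists_minimal : ∀ (n : ℕ) (W : Submodule ℂ (G → ℂ)), finrank ℂ W ≤ n → Inv W → W ≠ ⊥ →
    ∃ W₀, W₀ ≤ W ∧ Inv W₀ ∧ W₀ ≠ ⊥ ∧
      (∀ W₁, W₁ ≤ W₀ → Inv W₁ → W₁ ≠ ⊥ → W₁ = W₀) := by
  intro n
  induction n with
  | zero =>
    intro W hr _ hne
    exact absurd (Submodule.finrank_eq_zero.mp (Nat.le_zero.mp hr)) hne
  | succ n ih =>
    intro W hr hi hne
    by_cases hmin : ∀ W₁, W₁ ≤ W → Inv W₁ → W₁ ≠ ⊥ → W₁ = W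
    · exact ⟨W, le_rfl, hi, hne, hmin⟩
    · push_neg at hmin
      obtain ⟨W₁, hle, hinv1, hne1, hneW⟩ := hmin
      have hlt : Module.finrank ℂ W₁ < Module.finrank ℂ W :=
        Submodule.finrank_lt_finrank_of_lt (lt_of_le_of_ne hle hneW)
      obtain ⟨W₀, h0, h1, h2, h3⟩ := ih W₁ (by omega) hinv1 hne1
      exact ⟨W₀, h0.trans hle, h1, h2, h3⟩

variable (hcomplete : ∀ (m : ℕ) (ψ : G →* Matrix (Fin m) (Fin m) ℂ),
      MatRepIrreducible ψ → ∃ i, MatRepEquiv ψ (φ i))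

include hcomplete in
lemma good_of_minimal (W₀ : Submodule ℂ (G → ℂ)) (hinv : Inv W₀) (hne : W₀ ≠ ⊥)
    (hmin : ∀ W₁, W₁ ≤ W₀ → Inv W₁ → W₁ ≠ ⊥ → W₁ = W₀) : Good d φ W₀ := by
  classical
  set m := Module.finrank ℂ ↥W₀ with hm
  let c : Module.Basis (Fin m) ℂ ↥W₀ := Module.finBasis ℂ ↥W₀
  let e : ↥W₀ ≃ₗ[ℂ] (Fin m → ℂ) := c.equivFun
  have hres : ∀ g : G, ∀ x ∈ W₀, reg g x ∈ W₀ := fun g x hx => hinv g x hx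
  let res : G → Module.End ℂ ↥W₀ := fun g => (reg g).restrict (hres g)
  have res_apply : ∀ (g : G) (x : ↥W₀), (res g x : G → ℂ) = reg g (x : G → ℂ) :=
    fun g x => rfl
  let ψf : G → Matrix (Fin m) (Fin m) ℂ :=
    fun g => LinearMap.toMatrix' (e.toLinearMap ∘ₗ res g ∘ₗ e.symm.toLinearMap)
  have hmulVec : ∀ (g : G) (v : Fin m → ℂ), (ψf g).mulVec v = e (res g (e.symm v)) := by
    intro g v
    rw [← Matrix.toLin'_apply, Matrix.toLin'_toMatrix']
    rfl
  let ψ : G →* Matrix (Fin m) (Fin m) ℂ :=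
    { toFun := ψf
      map_one' := by
        have : (e.toLinearMap ∘ₗ res 1 ∘ₗ e.symm.toLinearMap) = LinearMap.id := by
          refine LinearMap.ext fun v => ?_
          simp only [LinearMap.comp_apply, LinearMap.id_apply, LinearEquiv.coe_coe]
          have : res 1 (e.symm v) = e.symm v := Subtype.ext (by rw [res_apply, reg_one])
          rw [this, e.apply_symm_apply]
        simp only [ψf, this, LinearMap.toMatrix'_id]
      map_mul' := by
        intro g h
        have : (e.toLinearMap ∘ₗ res (g * h) ∘ₗ e.symm.toLinearMap)
            = (e.toLinearMap ∘ₗ res g ∘ₗ e.symm.toLinearMap)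
              ∘ₗ (e.toLinearMap ∘ₗ res h ∘ₗ e.symm.toLinearMap) := by
          refine LinearMap.ext fun v => ?_
          simp only [LinearMap.comp_apply, LinearEquiv.coe_coe]
          rw [e.symm_apply_apply]
          congr 1
          exact Subtype.ext (by rw [res_apply, res_apply, res_apply, reg_reg])
        simp only [ψf, this, LinearMap.toMatrix'_comp] }
  have hψ : ∀ g v, (ψ g).mulVec v = e (res g (e.symm v)) := hmulVec
  -- the embedding of the model back into G → ℂ
  let f : (Fin m → ℂ) →ₗ[ℂ] (G → ℂ) := W₀.subtype ∘ₗ e.symm.toLinearMap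
  have hfinj : Function.Injective f := by
    intro x y hxy
    exact e.symm.injective (Subtype.ext hxy)
  have hfmem : ∀ v, f v ∈ W₀ := fun v => (e.symm v).2
  have hfeqv : ∀ g v, f ((ψ g).mulVec v) = reg g (f v) := by
    intro g v
    show (W₀.subtype) (e.symm ((ψ g).mulVec v)) = _
    rw [hψ, e.symm_apply_apply]
    exact res_apply g (e.symm v)
  -- irreducibility of ψ
  have hirrψ : MatRepIrreducible ψ := by
    constructor
    · rw [hm]
      exact Module.finrank_pos_iff.mpr (Submodule.nontrivial_iff_ne_bot.mpr hne)
    · intro Z hZ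
      by_cases hzb : Z = ⊥
      · exact Or.inl hzb
      · right
        set Z' := Z.map f with hZ'
        have hZle : Z' ≤ W₀ := by
          rintro _ ⟨z, _, rfl⟩; exact hfmem z
        have hZinv : Inv Z' := by
          rintro g _ ⟨z, hz, rfl⟩
          exact ⟨(ψ g).mulVec z, hZ g z hz, hfeqv g z⟩
        have hZne : Z' ≠ ⊥ := by
          obtain ⟨z, hz, hz0⟩ := Submodule.exists_mem_ne_zero_of_ne_bot hzb
          intro hb
          have : f z ∈ Z' := ⟨z, hz, rfl⟩
          rw [hb, Submodule.mem_bot] at this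
          exact hz0 (hfinj (by rw [this, map_zero]))
        have hZW : Z' = W₀ := hmin Z' hZle hZinv hZne
        rw [eq_top_iff]
        intro v _
        have : f v ∈ Z' := hZW ▸ hfmem v
        obtain ⟨z, hz, hfz⟩ := this
        rwa [← hfinj hfz]
  obtain ⟨i, e₂, he₂⟩ := hcomplete m ψ hirrψ
  let u : (Fin (d i) → ℂ) →ₗ[ℂ] (G → ℂ) := f ∘ₗ e₂.symm.toLinearMap
  have huinj : Function.Injective u := fun x y hxy => e₂.symm.injective (hfinj hxy)
  have hueqv : Eqv (φ i) u := by
    intro g x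
    have h1 : e₂.symm ((φ i g).mulVec x) = (ψ g).mulVec (e₂.symm x) := by
      apply e₂.injective
      rw [he₂, e₂.apply_symm_apply, e₂.apply_symm_apply]
    show f (e₂.symm ((φ i g).mulVec x)) = reg g (f (e₂.symm x))
    rw [h1, hfeqv]
  have hurange : LinearMap.range u = W₀ := by
    apply le_antisymm
    · rintro _ ⟨x, rfl⟩; exact hfmem _
    · intro w hw
      refine ⟨e₂ (e ⟨w, hw⟩), ?_⟩
      show f (e₂.symm (e₂ (e ⟨w, hw⟩))) = w
      rw [e₂.symm_apply_apply]
      show (W₀.subtype) (e.symm (e ⟨w, hw⟩)) = w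
      rw [e.symm_apply_apply]
      rfl
  refine ⟨PUnit, inferInstance, inferInstance, fun _ => i, fun _ => u, fun _ => hueqv, ?_, ?_⟩
  · intro x y hxy
    have : u (x PUnit.unit) = u (y PUnit.unit) := by
      have h1 := congrArg (fun z => z) hxy
      rw [Umap_apply, Umap_apply] at hxy
      simpa using hxy
    funext k
    cases k
    exact huinj this
  · apply le_antisymm
    · rintro _ ⟨x, rfl⟩
      rw [Umap_apply]
      simp only [Finset.univ_unique, Finset.sum_singleton]
      exact hurange ▸ LinearMap.mem_range_self _ _
    · intro w hw
      rw [← hurange] at hw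
      obtain ⟨x, rfl⟩ := hw
      refine ⟨fun _ => x, ?_⟩
      rw [Umap_apply]
      simp only [Finset.univ_unique, Finset.sum_singleton]

include hcomplete in
lemma good_all : ∀ (n : ℕ) (W : Submodule ℂ (G → ℂ)), Module.finrank ℂ W ≤ n → Inv W →
    Good d φ W := by
  intro n
  induction n with
  | zero =>
    intro W hr _
    rw [Submodule.finrank_eq_zero.mp (Nat.le_zero.mp hr)]
    exact good_bot φ
  | succ n ih =>
    intro W hr hi
    by_cases hne : W = ⊥
    · rw [hne]; exact good_bot φ
    · obtain ⟨W₀, h0le, h0inv, h0ne, h0min⟩ :=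
        exists_minimal (Module.finrank ℂ W) W le_rfl hi hne
      obtain ⟨q, hqW, hqid, hqeqv⟩ := maschke W₀ h0inv
      set W' := W ⊓ LinearMap.ker q with hW'
      have hW'inv : Inv W' := by
        intro g v hv
        rw [hW', Submodule.mem_inf] at hv ⊢
        obtain ⟨hvW, hvK⟩ := hv
        refine ⟨hi g v hvW, ?_⟩
        rw [LinearMap.mem_ker, hqeqv, LinearMap.mem_ker.mp hvK, map_zero]
      have hdisj : W₀ ⊓ W' = ⊥ := by
        rw [eq_bot_iff]
        intro x hx
        rw [Submodule.mem_inf, hW', Submodule.mem_inf] at hx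
        obtain ⟨hx0, _, hxK⟩ := hx
        rw [Submodule.mem_bot, ← hqid x hx0]
        exact LinearMap.mem_ker.mp hxK
      have hsup : W₀ ⊔ W' = W := by
        apply le_antisymm
        · exact sup_le h0le inf_le_left
        · intro x hx
          have hqx : q x ∈ W₀ := hqW x
          have hx2 : x - q x ∈ W' := by
            rw [hW', Submodule.mem_inf]
            refine ⟨W.sub_mem hx (h0le hqx), ?_⟩
            rw [LinearMap.mem_ker, map_sub, hqid _ hqx, sub_self]
          have : x = q x + (x - q x) := by ring
          rw [this]
          exact Submodule.add_mem _ (Submodule.mem_sup_left hqx) (Submodule.mem_sup_right hx2)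
      have hW'lt : W' < W := by
        refine lt_of_le_of_ne inf_le_left fun hEq => ?_
        have : W₀ ≤ W' := hEq ▸ h0le
        rw [← hdisj, inf_eq_left.mpr this] at h0ne
        exact h0ne rfl
      have hrk : Module.finrank ℂ W' ≤ n := by
        have := Submodule.finrank_lt_finrank_of_lt hW'lt
        omega
      have hg' : Good d φ W' := ih W' hrk hW'inv
      have hg0 : Good d φ W₀ := good_of_minimal φ hcomplete W₀ h0inv h0ne h0min
      rw [← hsup]
      exact good_sup φ hdisj hg0 hg'

include hcomplete in
lemma good_top : Good d φ (⊤ : Submodule ℂ (G → ℂ)) :=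
  good_all φ hcomplete (Module.finrank ℂ (⊤ : Submodule ℂ (G → ℂ))) ⊤ le_rfl
    (fun _ _ _ => trivial)

variable (d) in
/-- Intertwiners from the regular representation to `φ i`. -/
def TwR (φ : ∀ i, G →* Matrix (Fin (d i)) (Fin (d i)) ℂ) (i : Fin r) :
    Submodule ℂ ((G → ℂ) →ₗ[ℂ] (Fin (d i) → ℂ)) where
  carrier := {f | ∀ g v, f (reg g v) = (φ i g).mulVec (f v)}
  add_mem' := by
    intro a b ha hb g v
    simp only [LinearMap.add_apply, ha g v, hb g v, Matrix.mulVec_add]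
  zero_mem' := by intro g v; simp
  smul_mem' := by
    intro c a ha g v
    simp only [LinearMap.smul_apply, ha g v, Matrix.mulVec_smul]

variable (d) in
/-- Intertwiners from `φ j` to `φ i`. -/
def TwV (φ : ∀ i, G →* Matrix (Fin (d i)) (Fin (d i)) ℂ) (j i : Fin r) :
    Submodule ℂ ((Fin (d j) → ℂ) →ₗ[ℂ] (Fin (d i) → ℂ)) where
  carrier := {f | ∀ g v, f ((φ j g).mulVec v) = (φ i g).mulVec (f v)}
  add_mem' := by
    intro a b ha hb g v
    simp only [LinearMap.add_apply, ha g v, hb g v, Matrix.mulVec_add]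
  zero_mem' := by intro g v; simp
  smul_mem' := by
    intro c a ha g v
    simp only [LinearMap.smul_apply, ha g v, Matrix.mulVec_smul]

lemma delta_decomp (v : G → ℂ) : v = ∑ g : G, v g • (Pi.single g 1 : G → ℂ) := by
  funext x
  rw [Finset.sum_apply]
  rw [Finset.sum_eq_single x]
  · simp
  · intro g _ hg
    simp [Pi.single_apply, Ne.symm hg]
  · simp

lemma reg_single (g : G) : reg g (Pi.single (1 : G) (1 : ℂ)) = Pi.single g 1 := by
  funext x
  rw [reg_apply]
  simp only [Pi.single_apply]
  congr 1
  simp [eq_comm, inv_mul_eq_one]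

/-- Evaluation at `δ₁` is a linear equivalence `Hom_G(reg, V_i) ≃ V_i`. -/
lemma finrank_TwR (i : Fin r) : Module.finrank ℂ ↥(TwR d φ i) = d i := by
  classical
  let E : ↥(TwR d φ i) →ₗ[ℂ] (Fin (d i) → ℂ) :=
    { toFun := fun f => f.1 (Pi.single 1 1)
      map_add' := fun a b => rfl
      map_smul' := fun c a => rfl }
  have hinj : Function.Injective E := by
    intro a b hab
    apply Subtype.ext
    apply LinearMap.ext
    intro v
    rw [delta_decomp v]
    rw [map_sum, map_sum]
    refine Finset.sum_congr rfl fun g _ => ?_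
    rw [map_smul, map_smul, ← reg_single g, a.2 g, b.2 g]
    show _ • (φ i g).mulVec (E a) = _ • (φ i g).mulVec (E b)
    rw [hab]
  have hsurj : Function.Surjective E := by
    intro w
    set F : (G → ℂ) →ₗ[ℂ] (Fin (d i) → ℂ) :=
      ∑ g : G, LinearMap.smulRight (LinearMap.proj g : (G → ℂ) →ₗ[ℂ] ℂ) ((φ i g).mulVec w)
      with hF
    have hFapp : ∀ v, F v = ∑ g : G, v g • (φ i g).mulVec w := by
      intro v
      rw [hF]
      simp [LinearMap.sum_apply]
    have hFmem : F ∈ TwR d φ i := by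
      intro g₀ v
      rw [hFapp, hFapp]
      rw [← Matrix.mulVecLin_apply, map_sum]
      refine Fintype.sum_equiv (Equiv.mulLeft g₀⁻¹) _ _ fun g => ?_
      simp only [Equiv.coe_mulLeft, reg_apply, map_smul]
      rw [Matrix.mulVecLin_apply, Matrix.mulVec_mulVec, ← map_mul, mul_inv_cancel_left]
    refine ⟨⟨F, hFmem⟩, ?_⟩
    show F (Pi.single 1 1) = w
    rw [hFapp, Finset.sum_eq_single (1 : G)]
    · simp
    · intro g _ hg
      rw [Pi.single_apply]
      simp [hg]
    · simp
  have : Module.finrank ℂ ↥(TwR d φ i) = Module.finrank ℂ (Fin (d i) → ℂ) :=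
    (LinearEquiv.ofBijective E ⟨hinj, hsurj⟩).finrank_eq
  rw [this, Module.finrank_pi, Fintype.card_fin]

variable (hirr : ∀ i, MatRepIrreducible (φ i))
variable (hdist : ∀ i j, MatRepEquiv (φ i) (φ j) → i = j)

include hirr in
lemma tw_bijective {j i : Fin r} {f : (Fin (d j) → ℂ) →ₗ[ℂ] (Fin (d i) → ℂ)}
    (hf : f ∈ TwV d φ j i) (hf0 : f ≠ 0) : Function.Bijective f := by
  constructor
  · rw [← LinearMap.ker_eq_bot]
    rcases (hirr j).2 (LinearMap.ker f) (fun g v hv => by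
      rw [LinearMap.mem_ker, hf g v, LinearMap.mem_ker.mp hv, Matrix.mulVec_zero]) with h | h
    · exact h
    · exfalso
      apply hf0
      apply LinearMap.ext
      intro v
      have : v ∈ LinearMap.ker f := h ▸ Submodule.mem_top
      simpa using this
  · rw [← LinearMap.range_eq_top]
    rcases (hirr i).2 (LinearMap.range f) (fun g v hv => by
      obtain ⟨w, rfl⟩ := hv
      exact ⟨(φ j g).mulVec w, hf g w⟩) with h | h
    · exfalso
      apply hf0
      apply LinearMap.ext
      intro v
      have : f v ∈ LinearMap.range f := LinearMap.mem_range_self _ _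
      rw [h, Submodule.mem_bot] at this
      simpa using this
    · exact h

include hirr hdist in
lemma TwV_ne {j i : Fin r} (hij : j ≠ i) : TwV d φ j i = ⊥ := by
  rw [eq_bot_iff]
  intro f hf
  rw [Submodule.mem_bot]
  by_contra hf0
  have hbij := tw_bijective φ hirr hf hf0
  exact hij (hdist j i ⟨LinearEquiv.ofBijective f hbij, fun g v => hf g v⟩)

include hirr hdist in
lemma finrank_TwV_ne {j i : Fin r} (hij : j ≠ i) : Module.finrank ℂ ↥(TwV d φ j i) = 0 := by
  rw [TwV_ne φ hirr hdist hij, finrank_bot]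

include hirr in
lemma finrank_TwV_eq (i : Fin r) : Module.finrank ℂ ↥(TwV d φ i i) = 1 := by
  have hid : LinearMap.id ∈ TwV d φ i i := fun g v => rfl
  have hnontriv : Nontrivial (Fin (d i) → ℂ) := by
    have : 0 < d i := (hirr i).1
    have : Nonempty (Fin (d i)) := ⟨⟨0, this⟩⟩
    exact Function.nontrivial
  have hspan : TwV d φ i i = Submodule.span ℂ {(LinearMap.id : (Fin (d i) → ℂ) →ₗ[ℂ] (Fin (d i) → ℂ))} := by
    apply le_antisymm
    · intro f hf
      have : FiniteDimensional ℂ (Fin (d i) → ℂ) := inferInstance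
      obtain ⟨c, hc⟩ := Module.End.exists_eigenvalue (f : Module.End ℂ (Fin (d i) → ℂ))
      obtain ⟨v, hv⟩ := hc.exists_hasEigenvector
      set g : (Fin (d i) → ℂ) →ₗ[ℂ] (Fin (d i) → ℂ) := f - c • LinearMap.id with hg
      have hgmem : g ∈ TwV d φ i i :=
        Submodule.sub_mem _ hf (Submodule.smul_mem _ c hid)
      have hgv : g v = 0 := by
        rw [hg]
        simp [hv.apply_eq_smul]
      have hg0 : g = 0 := by
        by_contra h0
        have := (tw_bijective φ hirr hgmem h0).1
        have : v = 0 := by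
          apply this
          rw [hgv, map_zero]
        exact hv.2 this
      have : f = c • LinearMap.id := by
        rw [← sub_eq_zero]
        exact hg0
      rw [this]
      exact Submodule.smul_mem _ _ (Submodule.mem_span_singleton_self _)
    · rw [Submodule.span_le, Set.singleton_subset_iff]
      exact hid
  rw [hspan]
  apply finrank_span_singleton
  intro h
  obtain ⟨v, w, hvw⟩ := hnontriv
  rcases (em (v = 0)) with h1 | h1
  · have := LinearMap.congr_fun h w
    simp only [LinearMap.id_apply, LinearMap.zero_apply] at this
    exact hvw (by rw [h1, this])
  · have := LinearMap.congr_fun h v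
    simp only [LinearMap.id_apply, LinearMap.zero_apply] at this
    exact h1 this

include hirr hdist in
lemma multiplicity_count {ι : Type} [Fintype ι] [DecidableEq ι] (ind : ι → Fin r)
    (u : ∀ k, (Fin (d (ind k)) → ℂ) →ₗ[ℂ] (G → ℂ))
    (heqv : ∀ k, Eqv (φ (ind k)) (u k)) (hinj : Function.Injective (Umap ind u))
    (hrg : LinearMap.range (Umap ind u) = ⊤) (i : Fin r) :
    (Finset.univ.filter (fun k => ind k = i)).card = d i := by
  have hsurj : Function.Surjective (Umap ind u) := LinearMap.range_eq_top.mp hrg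
  let Ue : (∀ k, Fin (d (ind k)) → ℂ) ≃ₗ[ℂ] (G → ℂ) :=
    LinearEquiv.ofBijective (Umap ind u) ⟨hinj, hsurj⟩
  have hUe : ∀ x, Ue x = Umap ind u x := fun x => rfl
  have hUeqv : ∀ (g : G) (x : ∀ k, Fin (d (ind k)) → ℂ),
      Ue (fun k => (φ (ind k) g).mulVec (x k)) = reg g (Ue x) := by
    intro g x
    rw [hUe, hUe, Umap_apply, Umap_apply, map_sum]
    exact Finset.sum_congr rfl fun k _ => heqv k g (x k)
  have hUsym : ∀ (g : G) (v : G → ℂ),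
      Ue.symm (reg g v) = fun k => (φ (ind k) g).mulVec (Ue.symm v k) := by
    intro g v
    apply Ue.injective
    rw [Ue.apply_symm_apply, hUeqv, Ue.apply_symm_apply]
  let Ψ : ↥(TwR d φ i) →ₗ[ℂ] (∀ k, ↥(TwV d φ (ind k) i)) :=
    { toFun := fun f => fun k => ⟨f.1 ∘ₗ u k, by
        intro g v
        show f.1 (u k ((φ (ind k) g).mulVec v)) = (φ i g).mulVec (f.1 (u k v))
        rw [heqv k g v, f.2 g]⟩
      map_add' := fun a b => by
        funext k
        apply Subtype.ext
        show (a.1 + b.1) ∘ₗ u k = a.1 ∘ₗ u k + b.1 ∘ₗ u k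
        rw [LinearMap.add_comp]
      map_smul' := fun c a => by
        funext k
        apply Subtype.ext
        show (c • a.1) ∘ₗ u k = c • (a.1 ∘ₗ u k)
        rw [LinearMap.smul_comp] }
  have hΨinj : Function.Injective Ψ := by
    intro a b hab
    apply Subtype.ext
    apply LinearMap.ext
    intro v
    obtain ⟨x, rfl⟩ := hsurj v
    rw [Umap_apply, map_sum, map_sum]
    refine Finset.sum_congr rfl fun k _ => ?_
    have h1 := congrFun hab k
    have h2 := congrArg Subtype.val h1
    exact LinearMap.congr_fun h2 (x k)
  have hΨsurj : Function.Surjective Ψ := by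
    intro F
    let pk : ∀ k, (G → ℂ) →ₗ[ℂ] (Fin (d (ind k)) → ℂ) :=
      fun k => (LinearMap.proj k) ∘ₗ Ue.symm.toLinearMap
    have hpk : ∀ k v, pk k v = Ue.symm v k := fun k v => rfl
    set f : (G → ℂ) →ₗ[ℂ] (Fin (d i) → ℂ) := ∑ k, (F k).1 ∘ₗ pk k with hf
    have hfapp : ∀ v, f v = ∑ k, (F k).1 (Ue.symm v k) := by
      intro v
      rw [hf]
      simp [LinearMap.sum_apply, hpk]
    have hfmem : f ∈ TwR d φ i := by
      intro g v
      rw [hfapp, hfapp, ← Matrix.mulVecLin_apply, map_sum]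
      refine Finset.sum_congr rfl fun k _ => ?_
      rw [hUsym]
      rw [(F k).2 g (Ue.symm v k), Matrix.mulVecLin_apply]
    refine ⟨⟨f, hfmem⟩, ?_⟩
    funext k'
    apply Subtype.ext
    apply LinearMap.ext
    intro x
    show f (u k' x) = (F k').1 x
    have hux : u k' x = Ue (Pi.single k' x) := by
      rw [hUe, Umap_apply, Finset.sum_eq_single k']
      · rw [Pi.single_eq_same]
      · intro k _ hk
        rw [Pi.single_eq_of_ne hk, map_zero]
      · intro h
        exact absurd (Finset.mem_univ k') h
    rw [hfapp, hux, Ue.symm_apply_apply, Finset.sum_eq_single k']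
    · rw [Pi.single_eq_same]
    · intro k _ hk
      rw [Pi.single_eq_of_ne hk, map_zero]
    · intro h
      exact absurd (Finset.mem_univ k') h
  have hfr : Module.finrank ℂ ↥(TwR d φ i)
      = Module.finrank ℂ (∀ k, ↥(TwV d φ (ind k) i)) :=
    (LinearEquiv.ofBijective Ψ ⟨hΨinj, hΨsurj⟩).finrank_eq
  haveI : ∀ k, Module.Free ℂ ↥(TwV d φ (ind k) i) := fun k => Module.Free.of_divisionRing ℂ ↥(TwV d φ (ind k) i)
  rw [finrank_TwR, Module.finrank_pi_fintype] at hfr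
  have hterm : ∀ k, Module.finrank ℂ ↥(TwV d φ (ind k) i)
      = if ind k = i then 1 else 0 := by
    intro k
    by_cases h : ind k = i
    · rw [if_pos h]
      subst h
      exact finrank_TwV_eq φ hirr (ind k)
    · rw [if_neg h]
      exact finrank_TwV_ne φ hirr hdist h
  rw [Finset.sum_congr rfl fun k _ => hterm k] at hfr
  rw [Finset.card_filter]
  omega

/-- Determinant of a (dependent) block diagonal matrix. -/
lemma det_blockDiagonal'' {R : Type*} [CommRing R] {ι : Type*} [Fintype ι] [DecidableEq ι]
    {sz : ι → ℕ} (M : ∀ i, Matrix (Fin (sz i)) (Fin (sz i)) R) :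
    (Matrix.blockDiagonal' M).det = ∏ i, (M i).det := by
  classical
  letI : LinearOrder ι :=
    LinearOrder.lift' (Fintype.equivFin ι) (Fintype.equivFin ι).injective
  have hbt := Matrix.blockTriangular_blockDiagonal' M
  rw [hbt.det_fintype]
  refine Finset.prod_congr rfl fun k _ => ?_
  let e : Fin (sz k) ≃ { a : (Σ i, Fin (sz i)) // a.1 = k } :=
    { toFun := fun j => ⟨⟨k, j⟩, rfl⟩
      invFun := fun a => Fin.cast (congrArg sz a.2) a.1.2
      left_inv := fun j => rfl
      right_inv := by
        rintro ⟨⟨i, j⟩, rfl⟩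
        rfl }
  have : (Matrix.blockDiagonal' M).toSquareBlock Sigma.fst k = (M k).submatrix e.symm e.symm := by
    ext a b
    obtain ⟨⟨ia, ja⟩, ha⟩ := a
    obtain ⟨⟨ib, jb⟩, hb⟩ := b
    dsimp only [Sigma.fst] at ha hb
    subst ha
    subst hb
    exact Matrix.blockDiagonal'_apply_eq M _ _ _
  rw [this, Matrix.det_submatrix_equiv_self]

lemma reg_eqv_toMatrix {ι : Type} [Fintype ι] [DecidableEq ι] (ind : ι → Fin r)
    (u : ∀ k, (Fin (d (ind k)) → ℂ) →ₗ[ℂ] (G → ℂ))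
    (heqv : ∀ k, Eqv (φ (ind k)) (u k)) (hinj : Function.Injective (Umap ind u))
    (hrg : LinearMap.range (Umap ind u) = ⊤) :
    ∃ b : Module.Basis ((k : ι) × Fin (d (ind k))) ℂ (G → ℂ),
      ∀ g : G, LinearMap.toMatrix b b (reg g)
        = Matrix.blockDiagonal' (fun k => φ (ind k) g) := by
  have hsurj : Function.Surjective (Umap ind u) := LinearMap.range_eq_top.mp hrg
  let Ue : (∀ k, Fin (d (ind k)) → ℂ) ≃ₗ[ℂ] (G → ℂ) :=
    LinearEquiv.ofBijective (Umap ind u) ⟨hinj, hsurj⟩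
  have hUe : ∀ x, Ue x = Umap ind u x := fun x => rfl
  have hUeqv : ∀ (g : G) (x : ∀ k, Fin (d (ind k)) → ℂ),
      Ue (fun k => (φ (ind k) g).mulVec (x k)) = reg g (Ue x) := by
    intro g x
    rw [hUe, hUe, Umap_apply, Umap_apply, map_sum]
    exact Finset.sum_congr rfl fun k _ => heqv k g (x k)
  have hUsym : ∀ (g : G) (v : G → ℂ),
      Ue.symm (reg g v) = fun k => (φ (ind k) g).mulVec (Ue.symm v k) := by
    intro g v
    apply Ue.injective
    rw [Ue.apply_symm_apply, hUeqv, Ue.apply_symm_apply]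
  let bP : Module.Basis ((k : ι) × Fin (d (ind k))) ℂ (∀ k, Fin (d (ind k)) → ℂ) :=
    Pi.basis (fun k => Pi.basisFun ℂ (Fin (d (ind k))))
  refine ⟨bP.map Ue, fun g => ?_⟩
  ext ⟨k, a⟩ ⟨k', c⟩
  rw [LinearMap.toMatrix_apply, Module.Basis.map_apply, Module.Basis.map_repr]
  simp only [LinearEquiv.trans_apply]
  rw [hUsym, Ue.symm_apply_apply]
  rw [Pi.basis_repr]
  by_cases hkk : k = k'
  · subst hkk
    rw [Matrix.blockDiagonal'_apply_eq]
    have hb : bP ⟨k, c⟩ k = Pi.single c 1 := by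
      simp [bP, Pi.basis_apply]
    rw [hb]
    simp [Matrix.mulVec_single]
  · rw [Matrix.blockDiagonal'_apply_ne _ _ _ hkk]
    have hb : bP ⟨k', c⟩ k = 0 := by
      simp [bP, Pi.basis_apply, Pi.single_eq_of_ne hkk]
    rw [hb]
    simp [Matrix.mulVec_zero]

lemma groupDet_eq_sum :
    groupDet G = (∑ g : G, (X g : MvPolynomial G ℂ) •
      (LinearMap.toMatrix (Pi.basisFun ℂ G) (Pi.basisFun ℂ G) (reg g)).map
        (C : ℂ →+* MvPolynomial G ℂ)).det := by
  unfold groupDet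
  congr 1
  ext x y
  simp only [Matrix.sum_apply, Matrix.smul_apply, Matrix.map_apply, LinearMap.toMatrix_apply,
    Pi.basisFun_repr, Pi.basisFun_apply, Matrix.of_apply]
  have hentry : ∀ g : G, reg g (Pi.single y (1 : ℂ)) x
      = if g⁻¹ * x = y then (1 : ℂ) else 0 := by
    intro g
    rw [reg_apply, Pi.single_apply]
  rw [Finset.sum_congr rfl fun g _ => by rw [hentry g]]
  rw [Finset.sum_eq_single (x * y⁻¹)]
  · have : (x * y⁻¹)⁻¹ * x = y := by group
    rw [if_pos this]
    simp
  · intro g _ hne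
    have : ¬(g⁻¹ * x = y) := by
      intro h
      apply hne
      rw [← h]
      group
    rw [if_neg this]
    simp
  · intro h
    exact absurd (Finset.mem_univ _) h

lemma toMatrix_reindex_basis {n₁ n₂ : Type*} [Fintype n₁] [DecidableEq n₁]
    [Fintype n₂] [DecidableEq n₂] (b : Module.Basis n₂ ℂ (G → ℂ)) (e : n₂ ≃ n₁)
    (f : (G → ℂ) →ₗ[ℂ] (G → ℂ)) :
    LinearMap.toMatrix (b.reindex e) (b.reindex e) f
      = (LinearMap.toMatrix b b f).submatrix e.symm e.symm := by
  ext i j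
  rw [LinearMap.toMatrix_apply, Module.Basis.reindex_apply, Module.Basis.repr_reindex_apply,
    Matrix.submatrix_apply, LinearMap.toMatrix_apply]

lemma det_sum_eq_of_bases {n₁ n₂ : Type*} [Fintype n₁] [DecidableEq n₁]
    [Fintype n₂] [DecidableEq n₂]
    (b₁ : Module.Basis n₁ ℂ (G → ℂ)) (b₂ : Module.Basis n₂ ℂ (G → ℂ)) :
    (∑ g : G, (X g : MvPolynomial G ℂ) •
        (LinearMap.toMatrix b₁ b₁ (reg g)).map (C : ℂ →+* MvPolynomial G ℂ)).det
      = (∑ g : G, (X g : MvPolynomial G ℂ) •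
        (LinearMap.toMatrix b₂ b₂ (reg g)).map (C : ℂ →+* MvPolynomial G ℂ)).det := by
  let e : n₂ ≃ n₁ := b₂.indexEquiv b₁
  let b₂' : Module.Basis n₁ ℂ (G → ℂ) := b₂.reindex e
  have step2 : (∑ g : G, (X g : MvPolynomial G ℂ) •
        (LinearMap.toMatrix b₂' b₂' (reg g)).map (C : ℂ →+* MvPolynomial G ℂ)).det
      = (∑ g : G, (X g : MvPolynomial G ℂ) •
        (LinearMap.toMatrix b₂ b₂ (reg g)).map (C : ℂ →+* MvPolynomial G ℂ)).det := by
    have hsub : (∑ g : G, (X g : MvPolynomial G ℂ) •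
          (LinearMap.toMatrix b₂' b₂' (reg g)).map (C : ℂ →+* MvPolynomial G ℂ))
        = (∑ g : G, (X g : MvPolynomial G ℂ) •
          (LinearMap.toMatrix b₂ b₂ (reg g)).map
            (C : ℂ →+* MvPolynomial G ℂ)).submatrix e.symm e.symm := by
      have hre : ∀ g : G, LinearMap.toMatrix b₂' b₂' (reg g)
          = (LinearMap.toMatrix b₂ b₂ (reg g)).submatrix e.symm e.symm :=
        fun g => toMatrix_reindex_basis b₂ e (reg g)
      refine Matrix.ext fun i j => ?_
      simp only [Matrix.sum_apply, Matrix.smul_apply, Matrix.map_apply, Matrix.submatrix_apply]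
      refine Finset.sum_congr rfl fun g _ => ?_
      rw [hre g, Matrix.submatrix_apply]
    rw [hsub, Matrix.det_submatrix_equiv_self]
  rw [← step2]
  set P : Matrix n₁ n₁ ℂ := b₁.toMatrix b₂' with hP
  set Q : Matrix n₁ n₁ ℂ := b₂'.toMatrix b₁ with hQ
  have hPQ : P * Q = 1 := Module.Basis.toMatrix_mul_toMatrix_flip b₁ b₂'
  have hconj : ∀ g : G, LinearMap.toMatrix b₁ b₁ (reg g)
      = P * LinearMap.toMatrix b₂' b₂' (reg g) * Q := by
    intro g
    rw [hP, hQ, basis_toMatrix_mul_linearMap_toMatrix_mul_basis_toMatrix]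
  have hfact : (∑ g : G, (X g : MvPolynomial G ℂ) •
        (LinearMap.toMatrix b₁ b₁ (reg g)).map (C : ℂ →+* MvPolynomial G ℂ))
      = (P.map (C : ℂ →+* MvPolynomial G ℂ))
        * (∑ g : G, (X g : MvPolynomial G ℂ) •
            (LinearMap.toMatrix b₂' b₂' (reg g)).map (C : ℂ →+* MvPolynomial G ℂ))
        * (Q.map (C : ℂ →+* MvPolynomial G ℂ)) := by
    rw [Finset.mul_sum, Finset.sum_mul]
    refine Finset.sum_congr rfl fun g _ => ?_
    rw [hconj g, Matrix.map_mul, Matrix.map_mul, Matrix.mul_smul, Matrix.smul_mul]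
  rw [hfact, Matrix.det_mul, Matrix.det_mul]
  have hone : (P.map (C : ℂ →+* MvPolynomial G ℂ)).det
      * (Q.map (C : ℂ →+* MvPolynomial G ℂ)).det = 1 := by
    rw [← Matrix.det_mul, ← Matrix.map_mul, hPQ, Matrix.map_one _ (map_zero _) (map_one _),
      Matrix.det_one]
  calc (P.map (C : ℂ →+* MvPolynomial G ℂ)).det * (∑ g : G, (X g : MvPolynomial G ℂ) •
        (LinearMap.toMatrix b₂' b₂' (reg g)).map (C : ℂ →+* MvPolynomial G ℂ)).det
        * (Q.map (C : ℂ →+* MvPolynomial G ℂ)).det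
      = ((P.map (C : ℂ →+* MvPolynomial G ℂ)).det
          * (Q.map (C : ℂ →+* MvPolynomial G ℂ)).det)
        * (∑ g : G, (X g : MvPolynomial G ℂ) •
            (LinearMap.toMatrix b₂' b₂' (reg g)).map (C : ℂ →+* MvPolynomial G ℂ)).det := by
        ring
    _ = (∑ g : G, (X g : MvPolynomial G ℂ) •
          (LinearMap.toMatrix b₂' b₂' (reg g)).map (C : ℂ →+* MvPolynomial G ℂ)).det := by
        rw [hone, one_mul]

lemma sum_blockDiag {ι : Type} [Fintype ι] [DecidableEq ι] (ind : ι → Fin r) :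
    (∑ g : G, (X g : MvPolynomial G ℂ) •
        (Matrix.blockDiagonal' (fun k => φ (ind k) g)).map (C : ℂ →+* MvPolynomial G ℂ))
      = Matrix.blockDiagonal' (fun k => repMatrix (φ (ind k))) := by
  ext ⟨k, a⟩ ⟨k', c⟩
  simp only [Matrix.sum_apply, Matrix.smul_apply, Matrix.map_apply]
  by_cases hkk : k = k'
  · subst hkk
    rw [Matrix.blockDiagonal'_apply_eq]
    have : ∀ g : G, Matrix.blockDiagonal' (fun k => φ (ind k) g) ⟨k, a⟩ ⟨k, c⟩
        = φ (ind k) g a c := fun g => Matrix.blockDiagonal'_apply_eq _ _ _ _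
    rw [Finset.sum_congr rfl fun g _ => by rw [this g]]
    unfold repMatrix
    simp [Matrix.sum_apply, Matrix.smul_apply, Matrix.map_apply]
  · rw [Matrix.blockDiagonal'_apply_ne _ _ _ hkk]
    have : ∀ g : G, Matrix.blockDiagonal' (fun k => φ (ind k) g) ⟨k, a⟩ ⟨k', c⟩ = 0 :=
      fun g => Matrix.blockDiagonal'_apply_ne _ _ _ hkk
    rw [Finset.sum_congr rfl fun g _ => by rw [this g]]
    simp

end Frob

end

/-- Frobenius determinant theorem: `Θ_G = ∏ i, y_i ^ d_i`. -/
theorem frobenius_determinant {G : Type*} [Group G] [Fintype G] [DecidableEq G]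
    {r : ℕ} (d : Fin r → ℕ) (φ : ∀ i, G →* Matrix (Fin (d i)) (Fin (d i)) ℂ)
    (hirr : ∀ i, MatRepIrreducible (φ i))
    (hdist : ∀ i j, MatRepEquiv (φ i) (φ j) → i = j)
    (hcomplete : ∀ (m : ℕ) (ψ : G →* Matrix (Fin m) (Fin m) ℂ),
      MatRepIrreducible ψ → ∃ i, MatRepEquiv ψ (φ i)) :
    groupDet G = ∏ i, (repMatrix (φ i)).det ^ (d i) := by
  classical
  obtain ⟨ι, hfin, hdec, ind, u, heqv, hinj, hrg⟩ := Frob.good_top φ hcomplete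
  have hcard : ∀ i, (Finset.univ.filter (fun k => ind k = i)).card = d i :=
    fun i => Frob.multiplicity_count φ hirr hdist ind u heqv hinj hrg i
  obtain ⟨b, hb⟩ := Frob.reg_eqv_toMatrix φ ind u heqv hinj hrg
  rw [Frob.groupDet_eq_sum, Frob.det_sum_eq_of_bases (Pi.basisFun ℂ G) b]
  have h1 : (∑ g : G, (X g : MvPolynomial G ℂ) •
        (LinearMap.toMatrix b b (Frob.reg g)).map (C : ℂ →+* MvPolynomial G ℂ))
      = Matrix.blockDiagonal' (fun k => repMatrix (φ (ind k))) := by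
    rw [Finset.sum_congr rfl fun g _ => by rw [hb g]]
    exact Frob.sum_blockDiag φ ind
  rw [h1, Frob.det_blockDiagonal'']
  rw [← Finset.prod_fiberwise_of_maps_to (fun k _ => Finset.mem_univ (ind k))
    (fun k => (repMatrix (φ (ind k))).det)]
  refine Finset.prod_congr rfl fun i _ => ?_
  have hconst : ∀ k ∈ Finset.univ.filter (fun k => ind k = i),
      (repMatrix (φ (ind k))).det = (repMatrix (φ i)).det := by
    intro k hk
    rw [(Finset.mem_filter.mp hk).2]
  rw [Finset.prod_congr rfl hconst, Finset.prod_const, hcard i]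
end

section
/- Let G be a finite abelian group, H a subgroup, T a set of coset representatives of H in G, and χ a character of G. Define y_{tH}^χ := Σ_{h∈H} χ(th) x_{th}. Then Π_{χ'∈Ĝ_H} y_{χχ'} = Θ_{G/H}(y_{tH}^χ), where Ĝ_H := {χ'∈Ĝ : χ'(h)=1 for all h∈H}, y_ψ := Σ_{g∈G} ψ(g)x_g, and Θ_{G/H} is the group determinant of G/H evaluated at the variables y_{tH}^χ. -/
open MvPolynomial

section Frob

open scoped Classical

variable {Q : Type*} [CommGroup Q] [Fintype Q] [DecidableEq Q]

lemma char_sum_eq_zero (φ : Q →* ℂˣ) (hφ : φ ≠ 1) : ∑ a : Q, (φ a : ℂ) = 0 := by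
  obtain ⟨x, hx⟩ : ∃ x, φ x ≠ 1 := by
    by_contra h; push_neg at h; exact hφ (MonoidHom.ext fun a => by simp [h a])
  have h1 : (φ x : ℂ) * ∑ a : Q, (φ a : ℂ) = ∑ a : Q, (φ a : ℂ) := by
    rw [Finset.mul_sum]
    refine Fintype.sum_equiv (Equiv.mulLeft x) _ _ fun a => ?_
    simp [Equiv.mulLeft, map_mul]
  have h2 : ((φ x : ℂ) - 1) * ∑ a : Q, (φ a : ℂ) = 0 := by
    rw [sub_mul, one_mul, h1, sub_self]
  rcases mul_eq_zero.mp h2 with h | h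
  · exact absurd (Units.ext (by simpa using sub_eq_zero.mp h)) hx
  · exact h

lemma frobenius_det [Fintype (Q →* ℂˣ)] (w : Q → ℂ) :
    Matrix.det (Matrix.of fun a b : Q => w (a * b⁻¹)) =
      ∏ ψ : Q →* ℂˣ, ∑ q : Q, (ψ q : ℂ) * w q := by
  have : NeZero (Monoid.exponent Q) := ⟨Monoid.exponent_ne_zero_of_finite⟩
  obtain ⟨em⟩ := CommGroup.monoidHom_mulEquiv_of_hasEnoughRootsOfUnity Q ℂ
  set e : (Q →* ℂˣ) ≃ Q := em.toEquiv with he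
  set M : Matrix Q Q ℂ := Matrix.of fun a b : Q => w (a * b⁻¹) with hM
  set V : Matrix Q Q ℂ := Matrix.of fun a b : Q => ((e.symm b) a⁻¹ : ℂ) with hV
  set D : Matrix Q Q ℂ := Matrix.diagonal fun b => ∑ q : Q, ((e.symm b) q : ℂ) * w q with hD
  have key : M * V = V * D := by
    ext a b
    rw [Matrix.mul_apply, Matrix.mul_apply]
    have hR : ∑ c : Q, V a c * D c b = ((e.symm b) a⁻¹ : ℂ) * ∑ q : Q, ((e.symm b) q : ℂ) * w q := by
      rw [hD, hV]
      simp [Matrix.diagonal, Finset.sum_ite_eq, mul_comm]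
    rw [hR]
    have := Fintype.sum_equiv ((Equiv.inv Q).trans (Equiv.mulLeft a))
      (fun c => M a c * V c b)
      (fun q => ((e.symm b) a⁻¹ : ℂ) * (((e.symm b) q : ℂ) * w q)) ?_
    · rw [this, ← Finset.mul_sum]
    · intro q
      simp only [Equiv.trans_apply, Equiv.inv_apply, Equiv.coe_mulLeft, hM, hV,
        Matrix.of_apply]
      have h4 : (((e.symm b) q⁻¹ : ℂˣ) : ℂ) =
          ((e.symm b) a⁻¹ : ℂ) * ((e.symm b) (a * q⁻¹) : ℂ) := by
        rw [← Units.val_mul, ← map_mul, inv_mul_cancel_left]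
      rw [h4]
      ring
  -- V is invertible
  set n : ℂ := (Fintype.card Q : ℂ) with hn
  have hn0 : n ≠ 0 := Nat.cast_ne_zero.mpr Fintype.card_ne_zero
  set W : Matrix Q Q ℂ := Matrix.of fun b a : Q => ((e.symm b) a : ℂ) / n with hW
  have hWV : W * V = 1 := by
    ext b b'
    rw [Matrix.mul_apply]
    have : ∀ a : Q, W b a * V a b' = (((e.symm b) * (e.symm b')⁻¹) a : ℂ) / n := by
      intro a
      simp only [hW, hV, Matrix.of_apply, MonoidHom.mul_apply, MonoidHom.inv_apply,
        map_inv, Units.val_mul]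
      ring
    simp_rw [this, ← Finset.sum_div]
    by_cases hbb : b = b'
    · subst hbb
      simp [Finset.card_univ, hn0]
      exact div_self hn0
    · have hne : (e.symm b) * (e.symm b')⁻¹ ≠ 1 := by
        intro h
        exact hbb (e.symm.injective (mul_inv_eq_one.mp h))
      rw [char_sum_eq_zero _ hne]
      simp [Matrix.one_apply, hbb]
  have hVdet : V.det ≠ 0 := (Matrix.isUnit_det_of_left_inverse hWV).ne_zero
  have hdet : M.det * V.det = V.det * D.det := by
    rw [← Matrix.det_mul, ← Matrix.det_mul, key]
  have : M.det = D.det := by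
    rw [mul_comm V.det D.det] at hdet
    exact mul_right_cancel₀ hVdet hdet
  rw [this, hD, Matrix.det_diagonal]
  exact Fintype.prod_equiv e.symm _ _ fun b => rfl

end Frob

open scoped Classical in
/-- `∏_{χ' ∈ Ĝ_H} y_{χχ'} = Θ_{G/H}(y_{tH}^χ)`: the product of the linear forms attached
to the characters in the coset `χ Ĝ_H` is the group determinant of `G ⧸ H` evaluated at
the linear forms `y_{tH}^χ = ∑_{h ∈ H} χ(th) x_{th}`. -/
theorem prod_coset_chars_eq_quotient_groupDet {G : Type*} [CommGroup G] [Fintype G]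
    [DecidableEq G] (H : Subgroup G) [Fintype (G ⧸ H)] [DecidableEq (G ⧸ H)]
    [Fintype (G →* ℂˣ)] (χ : G →* ℂˣ)
    -- the linear forms `y_ψ = ∑_{g ∈ G} ψ(g) x_g`
    (y : (G →* ℂˣ) → MvPolynomial G ℂ)
    (hy : ∀ ψ : G →* ℂˣ, y ψ = ∑ g : G, C ((ψ g : ℂ)) * X g)
    -- the linear forms `y_{tH}^χ`, indexed by the cosets `tH ∈ G/H`
    (z : G ⧸ H → MvPolynomial G ℂ)
    (hz : ∀ q : G ⧸ H, z q =
      ∑ g : G, if (g : G ⧸ H) = q then C ((χ g : ℂ)) * X g else 0) :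
    ∏ χ' ∈ Finset.univ.filter (fun χ' : G →* ℂˣ => ∀ h ∈ H, χ' h = 1), y (χ * χ') =
      Matrix.det (Matrix.of fun a b : G ⧸ H => z (a * b⁻¹)) := by
  have hcomp_inj : Function.Injective
      (fun ψ : (G ⧸ H) →* ℂˣ => ψ.comp (QuotientGroup.mk' H)) := by
    intro ψ₁ ψ₂ h
    ext g
    exact congrArg Units.val (DFunLike.congr_fun h g)
  have hfin : Finite ((G ⧸ H) →* ℂˣ) := Finite.of_injective _ hcomp_inj
  letI : Fintype ((G ⧸ H) →* ℂˣ) := Fintype.ofFinite _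
  have hcomp_eq : ∀ (χ' : G →* ℂˣ) (h : ∀ x ∈ H, χ' x = 1),
      (QuotientGroup.lift H χ' h).comp (QuotientGroup.mk' H) = χ' := by
    intro χ' h
    ext g
    simp
    rfl
  have stepA : ∏ χ' ∈ Finset.univ.filter (fun χ' : G →* ℂˣ => ∀ h ∈ H, χ' h = 1), y (χ * χ')
      = ∏ ψ : (G ⧸ H) →* ℂˣ, y (χ * ψ.comp (QuotientGroup.mk' H)) := by
    refine Finset.prod_bij'
      (fun χ' hχ' => QuotientGroup.lift H χ' (fun x hx => (Finset.mem_filter.mp hχ').2 x hx))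
      (fun ψ _ => ψ.comp (QuotientGroup.mk' H))
      (fun χ' hχ' => Finset.mem_univ _) ?_ ?_ ?_ ?_
    · intro ψ _
      refine Finset.mem_filter.mpr ⟨Finset.mem_univ _, fun h hh => ?_⟩
      rw [MonoidHom.comp_apply, QuotientGroup.mk'_apply,
        (QuotientGroup.eq_one_iff h).mpr hh, map_one]
    · intro χ' hχ'
      exact hcomp_eq _ _
    · intro ψ _
      ext g
      simp
      rfl
    · intro χ' hχ'
      rw [hcomp_eq _ (fun x hx => (Finset.mem_filter.mp hχ').2 x hx)]
  have stepB : ∀ ψ : (G ⧸ H) →* ℂˣ,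
      y (χ * ψ.comp (QuotientGroup.mk' H)) = ∑ q : G ⧸ H, C ((ψ q : ℂ)) * z q := by
    intro ψ
    rw [hy]
    have hq : ∀ q : G ⧸ H, C ((ψ q : ℂ)) * z q =
        ∑ g : G, if (g : G ⧸ H) = q then C ((ψ q : ℂ)) * (C ((χ g : ℂ)) * X g) else 0 := by
      intro q
      rw [hz, Finset.mul_sum]
      exact Finset.sum_congr rfl fun g _ => by rw [mul_ite, mul_zero]
    rw [Finset.sum_congr rfl fun q _ => hq q, Finset.sum_comm]
    refine Finset.sum_congr rfl fun g _ => ?_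
    rw [Finset.sum_ite_eq]
    simp only [Finset.mem_univ, if_true, MonoidHom.mul_apply, MonoidHom.comp_apply,
      QuotientGroup.mk'_apply, Units.val_mul, map_mul]
    ring
  rw [stepA]
  rw [Finset.prod_congr rfl fun ψ _ => stepB ψ]
  refine MvPolynomial.funext fun x => ?_
  rw [RingHom.map_det, RingHom.mapMatrix_apply]
  have hmat : (Matrix.of fun a b : G ⧸ H => z (a * b⁻¹)).map (eval x)
      = Matrix.of fun a b : G ⧸ H => (fun q => eval x (z q)) (a * b⁻¹) := rfl
  rw [hmat, frobenius_det (fun q => eval x (z q)), map_prod]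
  refine Finset.prod_congr rfl fun ψ _ => ?_
  rw [map_sum]
  refine Finset.sum_congr rfl fun q _ => ?_
  rw [map_mul, eval_C]
end
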